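/- The tetrahedron in ℤ³ with vertices (1,0,0), (0,1,0), (1,-3,5), (-2,2,-5) is Fano: the only lattice point it contains besides its vertices is the origin, which lies strictly in its interior. Moreover the barycentric coordinate of the origin with respect to these vertices is (1/4,1/4,1/4,1/4). -/

import Mathlib

/-- The real vector corresponding to a lattice point of `ℤ³`. -/
noncomputable def toR (x : Fin 3 → ℤ) : Fin 3 → ℝ := fun i => (x i : ℝ)

/-- A lattice tetrahedron in `ℤ³` is *Fano* if its vertices are affinely independent
lattice points, and the only lattice point it contains other than its vertices is the
origin, which lies strictly in its interior. -/
def IsFanoTetra (x : Fin 4 → Fin 3 → ℤ) : Prop :=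
  AffineIndependent ℝ (fun i => toR (x i)) ∧
  (0 : Fin 3 → ℝ) ∈ interior (convexHull ℝ (Set.range fun i => toR (x i))) ∧
  ∀ p : Fin 3 → ℤ, toR p ∈ convexHull ℝ (Set.range fun i => toR (x i)) →
    p = 0 ∨ ∃ i, p = x i

set_option maxHeartbeats 1000000

lemma mem_hull_iff {n : ℕ} (v : Fin n → Fin 3 → ℝ) (p : Fin 3 → ℝ) :
    p ∈ convexHull ℝ (Set.range v) ↔
      ∃ w : Fin n → ℝ, (∀ i, 0 ≤ w i) ∧ ∑ i, w i = 1 ∧ ∑ i, w i • v i = p := by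
  rw [convexHull_range_eq_exists_affineCombination]
  constructor
  · rintro ⟨s, w, h0, h1, h2⟩
    have hs : ∑ i, Set.indicator (↑s) w i = 1 := by
      rw [← Finset.sum_indicator_subset w (Finset.subset_univ s)] at h1; exact h1
    refine ⟨Set.indicator (↑s) w, ?_, hs, ?_⟩
    · intro i; by_cases hi : i ∈ s <;> simp [Set.indicator_apply, hi, h0 i]
    · rw [← Finset.affineCombination_eq_linear_combination _ _ _ hs,
        ← Finset.affineCombination_indicator_subset w v (Finset.subset_univ s), h2]
  · rintro ⟨w, h0, h1, h2⟩
    exact ⟨Finset.univ, w, fun i _ => h0 i, h1,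
      by rw [Finset.affineCombination_eq_linear_combination _ _ _ h1, h2]⟩

theorem tetrahedron_1111_isFano :
    IsFanoTetra ![![1, 0, 0], ![0, 1, 0], ![1, -3, 5], ![-2, 2, -5]] ∧
    (∑ i, (![(1 : ℝ) / 4, 1 / 4, 1 / 4, 1 / 4] i) •
        toR (![![1, 0, 0], ![0, 1, 0], ![1, -3, 5], ![-2, 2, -5]] i)) = 0 ∧
    (∑ i, (![(1 : ℝ) / 4, 1 / 4, 1 / 4, 1 / 4] i)) = 1 := by
  refine ⟨⟨?_, ?_, ?_⟩, ?_, ?_⟩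
  · -- affine independence
    rw [affineIndependent_iff_of_fintype]
    intro w hw hv i
    rw [Finset.weightedVSub_eq_linear_combination _ hw] at hv
    have e0 := congrFun hv 0
    have e1 := congrFun hv 1
    have e2 := congrFun hv 2
    simp [Fin.sum_univ_four, toR] at e0 e1 e2
    rw [Fin.sum_univ_four] at hw
    fin_cases i <;> simp <;> linarith
  · -- interior
    have hsub : {p : Fin 3 → ℝ | (0 < 15*p 0 - 5*p 1 - 7*p 2 + 5) ∧
        (0 < -5*p 0 + 15*p 1 + 9*p 2 + 5) ∧ (0 < -5*p 0 - 5*p 1 + p 2 + 5) ∧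
        (0 < -5*p 0 - 5*p 1 - 3*p 2 + 5)} ⊆
        convexHull ℝ (Set.range fun i =>
          toR (![![1, 0, 0], ![0, 1, 0], ![1, -3, 5], ![-2, 2, -5]] i)) := by
      rintro p ⟨h0, h1, h2, h3⟩
      rw [mem_hull_iff]
      refine ⟨![(15*p 0 - 5*p 1 - 7*p 2 + 5)/20, (-5*p 0 + 15*p 1 + 9*p 2 + 5)/20,
        (-5*p 0 - 5*p 1 + p 2 + 5)/20, (-5*p 0 - 5*p 1 - 3*p 2 + 5)/20], ?_, ?_, ?_⟩
      · intro i; fin_cases i <;> simp <;> linarith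
      · rw [Fin.sum_univ_four]; simp; ring
      · funext j
        rw [Finset.sum_apply, Fin.sum_univ_four]
        fin_cases j <;> simp [toR] <;> ring
    have o0 : IsOpen {p : Fin 3 → ℝ | 0 < 15*p 0 - 5*p 1 - 7*p 2 + 5} :=
      isOpen_lt continuous_const (by fun_prop)
    have o1 : IsOpen {p : Fin 3 → ℝ | 0 < -5*p 0 + 15*p 1 + 9*p 2 + 5} :=
      isOpen_lt continuous_const (by fun_prop)
    have o2 : IsOpen {p : Fin 3 → ℝ | 0 < -5*p 0 - 5*p 1 + p 2 + 5} :=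
      isOpen_lt continuous_const (by fun_prop)
    have o3 : IsOpen {p : Fin 3 → ℝ | 0 < -5*p 0 - 5*p 1 - 3*p 2 + 5} :=
      isOpen_lt continuous_const (by fun_prop)
    have hopen : IsOpen {p : Fin 3 → ℝ | (0 < 15*p 0 - 5*p 1 - 7*p 2 + 5) ∧
        (0 < -5*p 0 + 15*p 1 + 9*p 2 + 5) ∧ (0 < -5*p 0 - 5*p 1 + p 2 + 5) ∧
        (0 < -5*p 0 - 5*p 1 - 3*p 2 + 5)} :=
      o0.inter (o1.inter (o2.inter o3))
    refine interior_maximal hsub hopen ?_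
    norm_num
  · -- lattice points
    intro p hp
    rw [mem_hull_iff] at hp
    obtain ⟨w, hw0, hw1, hw2⟩ := hp
    have e0 := congrFun hw2 0
    have e1 := congrFun hw2 1
    have e2 := congrFun hw2 2
    simp [Fin.sum_univ_four, toR] at e0 e1 e2
    rw [Fin.sum_univ_four] at hw1
    have c0 : (0:ℝ) ≤ ((15*p 0 - 5*p 1 - 7*p 2 + 5 : ℤ) : ℝ) := by
      push_cast
      have := hw0 0; have := hw0 1; have := hw0 2; have := hw0 3
      linarith
    have c1 : (0:ℝ) ≤ ((-5*p 0 + 15*p 1 + 9*p 2 + 5 : ℤ) : ℝ) := by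
      push_cast
      have := hw0 0; have := hw0 1; have := hw0 2; have := hw0 3
      linarith
    have c2 : (0:ℝ) ≤ ((-5*p 0 - 5*p 1 + p 2 + 5 : ℤ) : ℝ) := by
      push_cast
      have := hw0 0; have := hw0 1; have := hw0 2; have := hw0 3
      linarith
    have c3 : (0:ℝ) ≤ ((-5*p 0 - 5*p 1 - 3*p 2 + 5 : ℤ) : ℝ) := by
      push_cast
      have := hw0 0; have := hw0 1; have := hw0 2; have := hw0 3
      linarith
    have z0 : (0:ℤ) ≤ 15*p 0 - 5*p 1 - 7*p 2 + 5 := by exact_mod_cast c0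
    have z1 : (0:ℤ) ≤ -5*p 0 + 15*p 1 + 9*p 2 + 5 := by exact_mod_cast c1
    have z2 : (0:ℤ) ≤ -5*p 0 - 5*p 1 + p 2 + 5 := by exact_mod_cast c2
    have z3 : (0:ℤ) ≤ -5*p 0 - 5*p 1 - 3*p 2 + 5 := by exact_mod_cast c3
    have key : (p 0 = 0 ∧ p 1 = 0 ∧ p 2 = 0) ∨ (p 0 = 1 ∧ p 1 = 0 ∧ p 2 = 0) ∨
        (p 0 = 0 ∧ p 1 = 1 ∧ p 2 = 0) ∨ (p 0 = 1 ∧ p 1 = -3 ∧ p 2 = 5) ∨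
        (p 0 = -2 ∧ p 1 = 2 ∧ p 2 = -5) := by
      have ha1 : -2 ≤ p 0 := by omega
      have ha2 : p 0 ≤ 1 := by omega
      have hb1 : -3 ≤ p 1 := by omega
      have hb2 : p 1 ≤ 2 := by omega
      interval_cases h0 : (p 0) <;> interval_cases h1 : (p 1) <;> omega
    rcases key with ⟨h0, h1, h2⟩ | ⟨h0, h1, h2⟩ | ⟨h0, h1, h2⟩ | ⟨h0, h1, h2⟩ | ⟨h0, h1, h2⟩
    · exact Or.inl (funext fun i => by fin_cases i <;> simpa)
    · exact Or.inr ⟨0, funext fun i => by fin_cases i <;> simpa⟩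
    · exact Or.inr ⟨1, funext fun i => by fin_cases i <;> simpa⟩
    · exact Or.inr ⟨2, funext fun i => by fin_cases i <;> simpa⟩
    · exact Or.inr ⟨3, funext fun i => by fin_cases i <;> simpa⟩
  · funext j
    rw [Finset.sum_apply, Fin.sum_univ_four]
    fin_cases j <;> simp [toR] <;> norm_num
  · rw [Fin.sum_univ_four]; norm_num [Matrix.cons_val_two, Matrix.cons_val_three]
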